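/- If P(Aᶜ\B\C) ≥ P(Aᶜ\B)·P(Aᶜ\C) (with P(Aᶜ) normalized to fractions c₄ = P(Aᶜ\B\C)/P(Aᶜ), c₄+c₅ = P(Aᶜ\B)/P(Aᶜ), c₄+c₆ = P(Aᶜ\C)/P(Aᶜ)), then P(Aᶜ) ≤ c₄/((c₄+c₅)(c₄+c₆)); consequently, in the second solution group of the noisy-overlap analysis, adding fractional mass d₂ to q(Aᶜ\C) increases the false-positive estimate D at least as much as it increases the joint-event rate μ_sq, so it cannot improve F̂_β. -/

import Mathlib

/-- If `P(Aᶜ\B\C) ≥ P(Aᶜ\B)·P(Aᶜ\C)`, written via normalized fractions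
`c₄ = P(Aᶜ\B\C)/P(Aᶜ)`, `c₄+c₅ = P(Aᶜ\B)/P(Aᶜ)`, `c₄+c₆ = P(Aᶜ\C)/P(Aᶜ)` as
`c₄·P(Aᶜ) ≥ (c₄+c₅)(c₄+c₆)·P(Aᶜ)²`, then `P(Aᶜ) ≤ c₄/((c₄+c₅)(c₄+c₆))`; consequently
adding fractional mass `d₂` increases the false-positive estimate at least as much as the
joint-event rate: `d₂c₆·P(Aᶜ) ≤ d₂c₆·c₄/((c₄+c₅)(c₄+c₆))` for all `d₂ ≥ 0`. -/
theorem stmt19 (PAc c4 c5 c6 : ℝ)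
    (h4 : 0 ≤ c4) (h5 : 0 ≤ c5) (h6 : 0 ≤ c6)
    (h45 : c4 + c5 ≤ 1) (h46 : c4 + c6 ≤ 1)
    (h45p : 0 < c4 + c5) (h46p : 0 < c4 + c6)
    (hP : 0 < PAc)
    (hyp : (c4 + c5) * (c4 + c6) * PAc ^ 2 ≤ c4 * PAc) :
    PAc ≤ c4 / ((c4 + c5) * (c4 + c6))
    ∧ ∀ d2 : ℝ, 0 ≤ d2 → d2 * c6 * PAc ≤ d2 * c6 * (c4 / ((c4 + c5) * (c4 + c6))) := by
  have hprod : 0 < (c4 + c5) * (c4 + c6) := mul_pos h45p h46p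
  have key : PAc ≤ c4 / ((c4 + c5) * (c4 + c6)) := by
    rw [le_div_iff₀ hprod]
    have := (mul_le_mul_iff_left₀ hP).mp (by nlinarith : (c4 + c5) * (c4 + c6) * PAc * PAc ≤ c4 * PAc)
    linarith
  exact ⟨key, fun d2 hd2 => mul_le_mul_of_nonneg_left key (by positivity)⟩
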